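/- Let A and B be n×n Hermitian positive semidefinite complex matrices, and let a_1 ≥ a_2 ≥ … ≥ a_n and b_1 ≥ b_2 ≥ … ≥ b_n be their respective eigenvalues (given by the spectral theorem) arranged in nonincreasing order. Then the determinant det(I + A·B) is a real number and (det(I + A·B)).re ≤ ∏_{i=1}^{n} (1 + a_i·b_i). -/

import Mathlib

open Matrix ComplexOrder
open Finset



variable {R : Type*} [CommRing R] {k n : ℕ}

theorem step1 (A : Matrix (Fin k) (Fin n) R) (B : Matrix (Fin n) (Fin k) R) :
    (A * B).det = ∑ f : Fin k → Fin n, (∏ i, A i (f i)) * (B.submatrix f id).det := by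
  have h1 : det (A * B) =
      (detRowAlternating : (Fin k → R) [⋀^Fin k]→ₗ[R] R) (fun i => ∑ j, A i j • B j) := by
    congr 1
    funext i j'
    simp [mul_apply, Finset.sum_apply]
  have h2 := (detRowAlternating : (Fin k → R) [⋀^Fin k]→ₗ[R] R).toMultilinearMap.map_sum
      (g := fun (i : Fin k) (j : Fin n) => A i j • B j)
  simp only [AlternatingMap.coe_multilinearMap] at h2
  rw [h1, h2]
  refine Finset.sum_congr rfl fun f _ => ?_
  have h3 := (detRowAlternating : (Fin k → R) [⋀^Fin k]→ₗ[R] R).toMultilinearMap.map_smul_univ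
      (fun i => A i (f i)) (fun i => B (f i))
  simp only [AlternatingMap.coe_multilinearMap] at h3
  rw [h3, smul_eq_mul]
  rfl

lemma image_orderIsoOfFin (S : Finset (Fin n)) (h : S.card = k) :
    Finset.univ.image (fun i => (S.orderIsoOfFin h i : Fin n)) = S := by
  ext x
  simp only [mem_image, mem_univ, true_and]
  constructor
  · rintro ⟨i, rfl⟩; exact (S.orderIsoOfFin h i).2
  · intro hx; exact ⟨(S.orderIsoOfFin h).symm ⟨x, hx⟩, by simp⟩

lemma cb_bij :
    Function.Bijective (fun p : {S : Finset (Fin n) // S.card = k} × Equiv.Perm (Fin k) =>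
      (⟨fun i => (p.1.1.orderIsoOfFin p.1.2 (p.2 i) : Fin n), by
        intro i j hij
        exact p.2.injective ((p.1.1.orderIsoOfFin p.1.2).injective (Subtype.coe_injective hij))⟩ :
        {f : Fin k → Fin n // Function.Injective f})) := by
  constructor
  · rintro ⟨⟨S, hS⟩, σ⟩ ⟨⟨T, hT⟩, τ⟩ h
    have h := congrArg Subtype.val h; dsimp only at h
    have hST : S = T := by
      have h1 := image_orderIsoOfFin S hS
      have h2 := image_orderIsoOfFin T hT
      rw [← h1, ← h2]
      ext x
      simp only [mem_image, mem_univ, true_and]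
      constructor
      · rintro ⟨i, rfl⟩
        exact ⟨τ (σ.symm i), by rw [← congrFun h (σ.symm i)]; simp⟩
      · rintro ⟨i, rfl⟩
        exact ⟨σ (τ.symm i), by rw [congrFun h (τ.symm i)]; simp⟩
    subst hST
    simp only [Prod.mk.injEq, Subtype.mk.injEq, true_and]
    ext i
    have := congrFun h i
    have h3 := (S.orderIsoOfFin hS).injective (Subtype.coe_injective this)
    exact Fin.val_eq_of_eq h3
  · rintro ⟨f, hf⟩
    have hS : (Finset.univ.image f).card = k := by
      rw [Finset.card_image_of_injective _ hf, card_univ, Fintype.card_fin]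
    set S := Finset.univ.image f with hSdef
    have hmem : ∀ i, f i ∈ S := fun i => mem_image_of_mem f (mem_univ i)
    have hg : Function.Injective (fun i => (S.orderIsoOfFin hS).symm ⟨f i, hmem i⟩) := by
      intro i j hij
      apply hf
      have := (S.orderIsoOfFin hS).symm.injective hij
      exact congrArg Subtype.val this
    refine ⟨⟨⟨S, hS⟩, Equiv.ofBijective _ (Finite.injective_iff_bijective.mp hg)⟩, ?_⟩
    apply Subtype.ext
    funext i
    simp [Equiv.ofBijective]

theorem cauchyBinet (A : Matrix (Fin k) (Fin n) R) (B : Matrix (Fin n) (Fin k) R) :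
    (A * B).det = ∑ S : {S : Finset (Fin n) // S.card = k},
      (A.submatrix id (fun i => (S.1.orderIsoOfFin S.2 i : Fin n))).det *
      (B.submatrix (fun i => (S.1.orderIsoOfFin S.2 i : Fin n)) id).det := by
  rw [step1]
  have hz : ∀ f : Fin k → Fin n, ¬ Function.Injective f →
      (∏ i, A i (f i)) * (B.submatrix f id).det = 0 := by
    intro f hf
    simp only [Function.Injective, not_forall] at hf
    obtain ⟨i, j, hij, hne⟩ := hf
    rw [det_zero_of_row_eq hne (by funext j'; simp [submatrix, hij]), mul_zero]
  calc (∑ f : Fin k → Fin n, (∏ i, A i (f i)) * (B.submatrix f id).det)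
      = ∑ f ∈ Finset.univ.filter (fun f : Fin k → Fin n => Function.Injective f),
        (∏ i, A i (f i)) * (B.submatrix f id).det := by
        refine (Finset.sum_filter_of_ne fun f _ hne => ?_).symm
        by_contra hinj
        exact hne (hz f hinj)
    _ = ∑ f : {f : Fin k → Fin n // Function.Injective f},
        (∏ i, A i (f.1 i)) * (B.submatrix f.1 id).det := by
        exact Finset.sum_subtype _ (by simp) _
    _ = ∑ p : {S : Finset (Fin n) // S.card = k} × Equiv.Perm (Fin k),
        (∏ i, A i (p.1.1.orderIsoOfFin p.1.2 (p.2 i) : Fin n)) *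
        (B.submatrix (fun i => (p.1.1.orderIsoOfFin p.1.2 (p.2 i) : Fin n)) id).det :=
        (Fintype.sum_bijective _ cb_bij _ _ fun p => rfl).symm
    _ = ∑ S : {S : Finset (Fin n) // S.card = k},
      (A.submatrix id (fun i => (S.1.orderIsoOfFin S.2 i : Fin n))).det *
      (B.submatrix (fun i => (S.1.orderIsoOfFin S.2 i : Fin n)) id).det := by
        rw [Fintype.sum_prod_type]
        refine Finset.sum_congr rfl fun S _ => ?_
        set e : Fin k → Fin n := fun i => (S.1.orderIsoOfFin S.2 i : Fin n) with he
        have h1 : ∀ σ : Equiv.Perm (Fin k),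
            (B.submatrix (fun i => e (σ i)) id).det
              = (Equiv.Perm.sign σ : ℤ) * (B.submatrix e id).det := by
          intro σ
          have := det_permute σ (B.submatrix e id)
          simpa [Function.comp_def] using this
        calc (∑ σ : Equiv.Perm (Fin k),
              (∏ i, A i (e (σ i))) * (B.submatrix (fun i => e (σ i)) id).det)
            = (∑ σ : Equiv.Perm (Fin k),
              ((Equiv.Perm.sign σ : ℤ) : R) * ∏ i, (A.submatrix id e)ᵀ (σ i) i)
                * (B.submatrix e id).det := by
              rw [Finset.sum_mul]
              refine Finset.sum_congr rfl fun σ _ => ?_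
              rw [h1 σ]
              have : (∏ i, A i (e (σ i))) = ∏ i, (A.submatrix id e)ᵀ (σ i) i := rfl
              rw [this]; ring
          _ = (A.submatrix id e).det * (B.submatrix e id).det := by
              rw [← det_apply', det_transpose]


lemma softplus_tangent (u v : ℝ) :
    Real.log (1 + Real.exp u) + (Real.exp u / (1 + Real.exp u)) * (v - u)
      ≤ Real.log (1 + Real.exp v) := by
  have hu : (0:ℝ) < 1 + Real.exp u := by positivity
  have hv : (0:ℝ) < 1 + Real.exp v := by positivity
  set c : ℝ := Real.exp u / (1 + Real.exp u) with hc
  have hc0 : 0 ≤ c := by positivity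
  have hc1 : c ≤ 1 := by
    rw [hc, div_le_one hu]; linarith
  have key : (1 + Real.exp u) * Real.exp (c * (v - u)) ≤ 1 + Real.exp v := by
    have hconv := convexOn_exp.2 (Set.mem_univ (0:ℝ)) (Set.mem_univ (v - u))
      (by linarith : (0:ℝ) ≤ 1 - c) hc0 (by ring)
    simp only [smul_eq_mul, mul_zero, zero_add, Real.exp_zero, mul_one] at hconv
    have h2 : (1 + Real.exp u) * Real.exp (c * (v - u))
        ≤ (1 + Real.exp u) * ((1 - c) + c * Real.exp (v - u)) := by
      apply mul_le_mul_of_nonneg_left _ (le_of_lt hu)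
      exact hconv
    have h3 : (1 + Real.exp u) * ((1 - c) + c * Real.exp (v - u)) = 1 + Real.exp v := by
      have he : Real.exp u * Real.exp (v - u) = Real.exp v := by
        rw [← Real.exp_add]; congr 1; ring
      have h5 : (1 + Real.exp u) * (1 - c) = 1 := by rw [hc]; field_simp; ring
      have h6 : (1 + Real.exp u) * c = Real.exp u := by rw [hc]; field_simp
      calc (1 + Real.exp u) * ((1 - c) + c * Real.exp (v - u))
          = (1 + Real.exp u) * (1 - c) + ((1 + Real.exp u) * c) * Real.exp (v - u) := by ring
        _ = 1 + Real.exp v := by rw [h5, h6, he]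
    linarith
  calc Real.log (1 + Real.exp u) + c * (v - u)
      = Real.log ((1 + Real.exp u) * Real.exp (c * (v - u))) := by
        rw [Real.log_mul (ne_of_gt hu) (Real.exp_ne_zero _), Real.log_exp]
    _ ≤ Real.log (1 + Real.exp v) := Real.log_le_log (by positivity) key

lemma abel_nonneg (c d : ℕ → ℝ) (n : ℕ)
    (hmono : ∀ i j, i ≤ j → j < n → c j ≤ c i)
    (hc0 : ∀ i, i < n → 0 ≤ c i)
    (hD : ∀ m, m ≤ n → 0 ≤ ∑ i ∈ range m, d i) :
    0 ≤ ∑ i ∈ range n, c i * d i := by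
  have key : ∀ m, m ≤ n → ∀ γ : ℝ, 0 ≤ γ → (∀ i, i < m → γ ≤ c i) →
      γ * (∑ i ∈ range m, d i) ≤ ∑ i ∈ range m, c i * d i := by
    intro m
    induction m with
    | zero => intro _ γ _ _; simp
    | succ m ih =>
      intro hm γ hγ hγc
      have hm' : m ≤ n := le_of_lt (Nat.lt_of_lt_of_le (Nat.lt_succ_self m) hm)
      have hcm0 : 0 ≤ c m := hc0 m (Nat.lt_of_lt_of_le (Nat.lt_succ_self m) hm)
      have hcm : c m * (∑ i ∈ range m, d i) ≤ ∑ i ∈ range m, c i * d i :=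
        ih hm' (c m) hcm0 (fun i hi => hmono i m (le_of_lt hi) (Nat.lt_of_lt_of_le (Nat.lt_succ_self m) hm))
      have hγcm : γ ≤ c m := hγc m (Nat.lt_succ_self m)
      have hDm1 : 0 ≤ ∑ i ∈ range (m+1), d i := hD (m+1) hm
      rw [Finset.sum_range_succ, Finset.sum_range_succ]
      calc γ * (∑ i ∈ range m, d i + d m)
          ≤ c m * (∑ i ∈ range m, d i + d m) := by
            apply mul_le_mul_of_nonneg_right hγcm
            rw [← Finset.sum_range_succ]; exact hDm1
        _ = c m * (∑ i ∈ range m, d i) + c m * d m := by ring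
        _ ≤ (∑ i ∈ range m, c i * d i) + c m * d m := by linarith
  have := key n le_rfl 0 le_rfl (fun i hi => hc0 i hi)
  simpa using this

lemma prod_one_add_le_of_prefix_prod_le (x y : ℕ → ℝ) (n : ℕ)
    (hx : ∀ i j, i ≤ j → j < n → x j ≤ x i)
    (hx0 : ∀ i, i < n → 0 ≤ x i)
    (hy0 : ∀ i, i < n → 0 ≤ y i)
    (h : ∀ m, m ≤ n → ∏ i ∈ range m, x i ≤ ∏ i ∈ range m, y i) :
    ∏ i ∈ range n, (1 + x i) ≤ ∏ i ∈ range n, (1 + y i) := by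
  induction n with
  | zero => simp
  | succ m ih =>
    rcases eq_or_lt_of_le (hx0 m (Nat.lt_succ_self m)) with hxm | hxm
    · -- x m = 0
      have hle : ∏ i ∈ range m, (1 + x i) ≤ ∏ i ∈ range m, (1 + y i) :=
        ih (fun i j hij hj => hx i j hij (Nat.lt_succ_of_lt hj))
          (fun i hi => hx0 i (Nat.lt_succ_of_lt hi))
          (fun i hi => hy0 i (Nat.lt_succ_of_lt hi))
          (fun k hk => h k (Nat.le_succ_of_le hk))
      rw [Finset.prod_range_succ, Finset.prod_range_succ, ← hxm]
      have hpos : (0:ℝ) ≤ ∏ i ∈ range m, (1 + x i) :=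
        Finset.prod_nonneg fun i hi => by
          have := hx0 i (Nat.lt_succ_of_lt (Finset.mem_range.mp hi)); linarith
      have h1y : (1:ℝ) ≤ 1 + y m := by have := hy0 m (Nat.lt_succ_self m); linarith
      calc (∏ i ∈ range m, (1 + x i)) * (1 + 0)
          = ∏ i ∈ range m, (1 + x i) := by ring
        _ ≤ ∏ i ∈ range m, (1 + y i) := hle
        _ ≤ (∏ i ∈ range m, (1 + y i)) * (1 + y m) := by
            nlinarith [hle, hpos]
    · -- all x i > 0 for i < m+1
      set N := m + 1
      have hxpos : ∀ i, i < N → 0 < x i := fun i hi =>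
        lt_of_lt_of_le hxm (hx i m (Nat.lt_succ_iff.mp hi) (Nat.lt_succ_self m))
      have hypos : ∀ i, i < N → 0 < y i := by
        intro j hj
        rcases (hy0 j hj).lt_or_eq with h' | h'
        · exact h'
        · exfalso
          have hk := h (j+1) hj
          have hxp : 0 < ∏ i ∈ range (j+1), x i :=
            Finset.prod_pos fun i hi => hxpos i (lt_of_lt_of_le (Finset.mem_range.mp hi) hj)
          have hyp : ∏ i ∈ range (j+1), y i = 0 := by
            apply Finset.prod_eq_zero (Finset.mem_range.mpr (Nat.lt_succ_self j))
            exact h'.symm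
          rw [hyp] at hk
          linarith
      -- log approach
      have hsum : ∑ i ∈ range N, Real.log (1 + x i) ≤ ∑ i ∈ range N, Real.log (1 + y i) := by
        have habel : 0 ≤ ∑ i ∈ range N, (x i / (1 + x i)) * (Real.log (y i) - Real.log (x i)) := by
          apply abel_nonneg
          · intro i j hij hj
            have hxj := hxpos j hj
            have hxi := hxpos i (lt_of_le_of_lt hij hj)
            have hxji : x j ≤ x i := hx i j hij hj
            rw [div_le_div_iff₀ (by linarith) (by linarith)]
            nlinarith
          · intro i hi
            have := hxpos i hi
            positivity
          · intro p hp
            have hlx : ∑ i ∈ range p, Real.log (x i) = Real.log (∏ i ∈ range p, x i) := by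
              rw [Real.log_prod]
              intro i hi
              exact ne_of_gt (hxpos i (lt_of_lt_of_le (Finset.mem_range.mp hi) hp))
            have hly : ∑ i ∈ range p, Real.log (y i) = Real.log (∏ i ∈ range p, y i) := by
              rw [Real.log_prod]
              intro i hi
              exact ne_of_gt (hypos i (lt_of_lt_of_le (Finset.mem_range.mp hi) hp))
            have hxp : 0 < ∏ i ∈ range p, x i :=
              Finset.prod_pos fun i hi => hxpos i (lt_of_lt_of_le (Finset.mem_range.mp hi) hp)
            have := Real.log_le_log hxp (h p hp)
            simp only [Finset.sum_sub_distrib, hlx, hly]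
            linarith
        have htan : ∀ i, i < N → Real.log (1 + x i) + (x i / (1 + x i)) *
            (Real.log (y i) - Real.log (x i)) ≤ Real.log (1 + y i) := by
          intro i hi
          have h1 := softplus_tangent (Real.log (x i)) (Real.log (y i))
          rwa [Real.exp_log (hxpos i hi), Real.exp_log (hypos i hi)] at h1
        have hsum2 : ∑ i ∈ range N, (Real.log (1 + x i) + (x i / (1 + x i)) *
            (Real.log (y i) - Real.log (x i))) ≤ ∑ i ∈ range N, Real.log (1 + y i) :=
          Finset.sum_le_sum fun i hi => htan i (Finset.mem_range.mp hi)
        rw [Finset.sum_add_distrib] at hsum2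
        linarith
      have hpx : ∀ i ∈ range N, (0:ℝ) < 1 + x i := fun i hi => by
        have := hxpos i (Finset.mem_range.mp hi); linarith
      have hpy : ∀ i ∈ range N, (0:ℝ) < 1 + y i := fun i hi => by
        have := hypos i (Finset.mem_range.mp hi); linarith
      have hlogx : Real.log (∏ i ∈ range N, (1 + x i)) = ∑ i ∈ range N, Real.log (1 + x i) :=
        Real.log_prod fun i hi => ne_of_gt (hpx i hi)
      have hlogy : Real.log (∏ i ∈ range N, (1 + y i)) = ∑ i ∈ range N, Real.log (1 + y i) :=
        Real.log_prod fun i hi => ne_of_gt (hpy i hi)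
      have hprodx : 0 < ∏ i ∈ range N, (1 + x i) := Finset.prod_pos hpx
      have hprody : 0 < ∏ i ∈ range N, (1 + y i) := Finset.prod_pos hpy
      rw [← Real.log_le_log_iff hprodx hprody, hlogx, hlogy]
      exact hsum

lemma strictMono_fin_le {k : ℕ} (f : Fin k → ℕ) (hf : StrictMono f) (i : Fin k) : (i : ℕ) ≤ f i := by
  have H : ∀ v : ℕ, ∀ hv : v < k, v ≤ f ⟨v, hv⟩ := by
    intro v
    induction v with
    | zero => intro hv; exact Nat.zero_le _
    | succ w ih =>
      intro hv
      have hw : w < k := Nat.lt_of_succ_lt hv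
      have h2 : f ⟨w, hw⟩ < f ⟨w+1, hv⟩ := hf (by simp [Fin.lt_def])
      have := ih hw
      omega
  exact H i.1 i.2

lemma prod_antitone_subset_le {n k : ℕ} (b : Fin n → ℝ) (hb : Antitone b)
    (hb0 : ∀ i, 0 ≤ b i) (T : Finset (Fin n)) (hT : T.card = k) (hk : k ≤ n) :
    ∏ j ∈ T, b j ≤ ∏ i : Fin k, b (Fin.castLE hk i) := by
  have hinj : Function.Injective (fun i : Fin k => (T.orderIsoOfFin hT i : Fin n)) :=
    fun i j hij => (T.orderIsoOfFin hT).injective (Subtype.coe_injective hij)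
  rw [← image_orderIsoOfFin T hT, Finset.prod_image (fun i _ j _ h => hinj h)]
  apply Finset.prod_le_prod (fun i _ => hb0 _)
  intro i _
  apply hb
  have hsm : StrictMono (fun i : Fin k => ((T.orderIsoOfFin hT i : Fin n) : ℕ)) := by
    intro i j hij
    exact Fin.val_strictMono (Subtype.strictMono_coe _ ((T.orderIsoOfFin hT).strictMono hij))
  exact Fin.le_def.mpr (strictMono_fin_le _ hsm i)

lemma conj_submatrix {n m : ℕ} (U C : Matrix (Fin n) (Fin n) ℂ) (q : Fin m → Fin n) :
    (U.submatrix id q)ᴴ * C * (U.submatrix id q) = ((star U) * C * U).submatrix q q := by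
  ext i j
  simp only [mul_apply, submatrix_apply, conjTranspose_apply, star_apply, id_eq,
    Finset.sum_mul, Finset.mul_sum]

lemma key_det_le {n k : ℕ} {B : Matrix (Fin n) (Fin n) ℂ} (hB : B.PosSemidef)
    (c : ℝ) (hc : ∀ T : Finset (Fin n), T.card = k → ∏ j ∈ T, hB.1.eigenvalues j ≤ c)
    (W : Matrix (Fin n) (Fin k) ℂ) :
    (Wᴴ * B * W).det.re ≤ c * (Wᴴ * W).det.re := by
  classical
  set U : Matrix (Fin n) (Fin n) ℂ := (hB.1.eigenvectorUnitary : Matrix (Fin n) (Fin n) ℂ) with hU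
  set ν : Fin n → ℝ := hB.1.eigenvalues with hν
  set D : Matrix (Fin n) (Fin n) ℂ := diagonal (RCLike.ofReal ∘ ν) with hD
  set M : Matrix (Fin n) (Fin k) ℂ := (star U) * W with hM
  have hUU : U * star U = 1 := Matrix.mem_unitaryGroup_iff.mp (hB.1.eigenvectorUnitary).2
  have hspec : B = U * D * star U := hB.1.spectral_theorem
  have hMH : Mᴴ = Wᴴ * U := by
    rw [hM, conjTranspose_mul, star_eq_conjTranspose, conjTranspose_conjTranspose]
  have hBW : Wᴴ * B * W = Mᴴ * (D * M) := by
    conv_lhs => rw [hspec]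
    rw [hMH, hM]; simp only [Matrix.mul_assoc]
  have hWW : Wᴴ * W = Mᴴ * M := by
    rw [hMH, hM, ← Matrix.mul_assoc, Matrix.mul_assoc Wᴴ U (star U), hUU, Matrix.mul_one]
  have hCB1 := cauchyBinet Mᴴ (D * M)
  have hCB2 := cauchyBinet Mᴴ M
  have hterm : ∀ S : {S : Finset (Fin n) // S.card = k},
      (Mᴴ.submatrix id (fun i => (S.1.orderIsoOfFin S.2 i : Fin n))).det *
      ((D * M).submatrix (fun i => (S.1.orderIsoOfFin S.2 i : Fin n)) id).det
      = (((∏ i : Fin k, ν (S.1.orderIsoOfFin S.2 i)) *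
          Complex.normSq ((M.submatrix (fun i => (S.1.orderIsoOfFin S.2 i : Fin n)) id).det) : ℝ) : ℂ) := by
    intro S
    set e : Fin k → Fin n := fun i => (S.1.orderIsoOfFin S.2 i : Fin n) with he
    have h1 : Mᴴ.submatrix id e = (M.submatrix e id)ᴴ := by
      ext i j; simp [submatrix_apply, conjTranspose_apply]
    have h2 : (D * M).submatrix e id
        = Matrix.of (fun i j => (ν (e i) : ℂ) * (M.submatrix e id) i j) := by
      ext i j
      simp only [hD, submatrix_apply, Matrix.diagonal_mul, Matrix.of_apply, Function.comp_apply]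
      rfl
    rw [h1, h2, det_conjTranspose, det_mul_column]
    set z := (M.submatrix e id).det
    rw [show star z * ((∏ i, (ν (e i) : ℂ)) * z) = (∏ i, (ν (e i) : ℂ)) * ((starRingEnd ℂ) z * z) by
      rw [RCLike.star_def]; ring]
    rw [← Complex.normSq_eq_conj_mul_self]
    push_cast
    ring
  have hterm2 : ∀ S : {S : Finset (Fin n) // S.card = k},
      (Mᴴ.submatrix id (fun i => (S.1.orderIsoOfFin S.2 i : Fin n))).det *
      (M.submatrix (fun i => (S.1.orderIsoOfFin S.2 i : Fin n)) id).det
      = ((Complex.normSq ((M.submatrix (fun i => (S.1.orderIsoOfFin S.2 i : Fin n)) id).det) : ℝ) : ℂ) := by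
    intro S
    set e : Fin k → Fin n := fun i => (S.1.orderIsoOfFin S.2 i : Fin n) with he
    have h1 : Mᴴ.submatrix id e = (M.submatrix e id)ᴴ := by
      ext i j; simp [submatrix_apply, conjTranspose_apply]
    rw [h1, det_conjTranspose, RCLike.star_def, ← Complex.normSq_eq_conj_mul_self]
  clear_value U ν D M
  rw [hBW, hWW]
  simp only [hCB1, hCB2]
  simp only [hterm, hterm2]
  simp only [Complex.re_sum, Complex.ofReal_re, Finset.mul_sum]
  apply Finset.sum_le_sum
  intro S _
  apply mul_le_mul_of_nonneg_right _ (Complex.normSq_nonneg _)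
  have himg : ∏ j ∈ S.1, ν j = ∏ i : Fin k, ν (S.1.orderIsoOfFin S.2 i) := by
    conv_lhs => rw [← image_orderIsoOfFin S.1 S.2]
    rw [Finset.prod_image]
    intro i _ j _ h
    exact ((S.1.orderIsoOfFin S.2).injective (Subtype.coe_injective h))
  rw [← himg]
  exact hc S.1 S.2

section PsdSqrtAux
open scoped MatrixOrder

noncomputable def Matrix.PosSemidef.sqrt {m : ℕ} {A : Matrix (Fin m) (Fin m) ℂ} (_ : A.PosSemidef) :
    Matrix (Fin m) (Fin m) ℂ := CFC.sqrt A

lemma Matrix.PosSemidef.posSemidef_sqrt {m : ℕ} {A : Matrix (Fin m) (Fin m) ℂ} (hA : A.PosSemidef) :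
    hA.sqrt.PosSemidef := (CFC.sqrt_nonneg A).posSemidef

lemma Matrix.PosSemidef.sqrt_mul_self {m : ℕ} {A : Matrix (Fin m) (Fin m) ℂ} (hA : A.PosSemidef) :
    hA.sqrt * hA.sqrt = A := CFC.sqrt_mul_sqrt_self A hA.nonneg

end PsdSqrtAux

/-- (Theorem H.1.h of Marshall–Olkin.) Let `A` and `B` be `n × n`
Hermitian positive semidefinite complex matrices and let `a` and `b` be their
respective eigenvalues (given by the spectral theorem) arranged in nonincreasing
order. Then `det (I + A * B)` is a real number and
`(det (I + A * B)).re ≤ ∏ i, (1 + a i * b i)`. -/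
theorem det_one_add_mul_le_prod_ordered_eigenvalues
    (n : ℕ) (A B : Matrix (Fin n) (Fin n) ℂ)
    (hA : A.PosSemidef) (hB : B.PosSemidef)
    (a b : Fin n → ℝ) (ha : Antitone a) (hb : Antitone b)
    (σ : Equiv.Perm (Fin n)) (hσ : a = hA.1.eigenvalues ∘ σ)
    (τ : Equiv.Perm (Fin n)) (hτ : b = hB.1.eigenvalues ∘ τ) :
    ((1 + A * B).det).im = 0 ∧
    ((1 + A * B).det).re ≤ ∏ i : Fin n, (1 + a i * b i) := by
  classical
  set Q := hA.sqrt with hQdef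
  have hQ := hA.posSemidef_sqrt
  have hQH : Qᴴ = Q := hQ.1
  set C := Q * B * Q with hCdef
  have hC : C.PosSemidef := by
    have h := hB.mul_mul_conjTranspose_same Q
    rwa [hQH] at h
  have hAB : (1 + A * B).det = (1 + C).det := by
    have h1 : A * B = Q * (Q * B) := by rw [← Matrix.mul_assoc, hA.sqrt_mul_self]
    rw [h1, det_one_add_mul_comm, hCdef, Matrix.mul_assoc]
  set ν := hC.1.eigenvalues with hνdef
  have hν0 : ∀ i, 0 ≤ ν i := hC.eigenvalues_nonneg
  have hdet1C : (1 + C).det = ((∏ i, (1 + ν i) : ℝ) : ℂ) := by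
    set U := (hC.1.eigenvectorUnitary : Matrix (Fin n) (Fin n) ℂ) with hUdef
    have hUU : U * star U = 1 := Matrix.mem_unitaryGroup_iff.mp (hC.1.eigenvectorUnitary).2
    have hspec : C = U * diagonal (RCLike.ofReal ∘ ν) * star U := hC.1.spectral_theorem
    have h1 : (1 : Matrix (Fin n) (Fin n) ℂ) + C
        = U * (1 + diagonal (RCLike.ofReal ∘ ν)) * star U := by
      rw [Matrix.mul_add, Matrix.add_mul, Matrix.mul_one, hUU, ← hspec]
    rw [h1, det_mul_right_comm, hUU, Matrix.one_mul]
    have h2 : (1 : Matrix (Fin n) (Fin n) ℂ) + diagonal (RCLike.ofReal ∘ ν)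
        = diagonal (fun i => ((1 + ν i : ℝ) : ℂ)) := by
      rw [← Matrix.diagonal_one, Matrix.diagonal_add]
      congr 1
      funext i
      push_cast
      rfl
    rw [h2, det_diagonal, ← Complex.ofReal_prod]
  have him : ((1 + A * B).det).im = 0 := by rw [hAB, hdet1C]; exact Complex.ofReal_im _
  have hre : ((1 + A * B).det).re = ∏ i, (1 + ν i) := by rw [hAB, hdet1C]; exact Complex.ofReal_re _
  set p : Equiv.Perm (Fin n) := Fin.revPerm.trans (Tuple.sort ν) with hpdef
  set μ : Fin n → ℝ := fun i => ν (p i) with hμdef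
  have hμanti : Antitone μ := by
    intro i j hij
    exact Tuple.monotone_sort ν (Fin.rev_le_rev.mpr hij)
  have hμ0 : ∀ i, 0 ≤ μ i := fun i => hν0 _
  have hprodμ : ∏ i, (1 + ν i) = ∏ i, (1 + μ i) := (Equiv.prod_comp p (fun i => 1 + ν i)).symm
  have ha0 : ∀ i, 0 ≤ a i := by intro i; rw [hσ]; exact hA.eigenvalues_nonneg _
  have hb0 : ∀ i, 0 ≤ b i := by intro i; rw [hτ]; exact hB.eigenvalues_nonneg _
  have haeig : ∀ j, hA.1.eigenvalues j = a (σ.symm j) := by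
    intro j; rw [hσ]; simp
  have hbeig : ∀ j, hB.1.eigenvalues j = b (τ.symm j) := by
    intro j; rw [hτ]; simp
  -- Horn-type inequalities
  have horn : ∀ m (hm : m ≤ n), ∏ i : Fin m, μ (Fin.castLE hm i)
      ≤ (∏ i : Fin m, a (Fin.castLE hm i)) * ∏ i : Fin m, b (Fin.castLE hm i) := by
    intro m hm
    set U := (hC.1.eigenvectorUnitary : Matrix (Fin n) (Fin n) ℂ) with hUdef
    have hdiagC : star U * C * U = diagonal (RCLike.ofReal ∘ ν) :=
      by have h := hC.1.conjStarAlgAut_star_eigenvectorUnitary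
         rwa [Unitary.conjStarAlgAut_star_apply] at h
    have hU1 : star U * U = 1 := Matrix.mem_unitaryGroup_iff'.mp (hC.1.eigenvectorUnitary).2
    set q : Fin m → Fin n := fun i => p (Fin.castLE hm i) with hq
    have hqinj : Function.Injective q := fun i j h =>
      Fin.castLE_injective hm (p.injective h)
    set V := U.submatrix id q with hV
    have hVV : Vᴴ * V = 1 := by
      have h := conj_submatrix U 1 q
      rw [Matrix.mul_one, Matrix.mul_one] at h
      rw [hV, h, hU1]
      ext i j
      by_cases hij : i = j
      · subst hij; simp [submatrix_apply]
      · simp [submatrix_apply, one_apply, hij, hqinj.ne hij]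
    have hVCV : Vᴴ * C * V = diagonal (fun i : Fin m => ((μ (Fin.castLE hm i) : ℝ) : ℂ)) := by
      rw [hV, conj_submatrix, hdiagC]
      ext i j
      by_cases hij : i = j
      · subst hij
        simp only [submatrix_apply, diagonal_apply_eq]
        rfl
      · simp only [submatrix_apply, diagonal_apply_ne _ (hqinj.ne hij),
          diagonal_apply_ne _ hij]
    set ca := ∏ i : Fin m, a (Fin.castLE hm i) with hca_def
    set cb := ∏ i : Fin m, b (Fin.castLE hm i) with hcb_def
    have hca : ∀ T : Finset (Fin n), T.card = m → ∏ j ∈ T, hA.1.eigenvalues j ≤ ca := by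
      intro T hT
      have h1 : ∏ j ∈ T, hA.1.eigenvalues j = ∏ j ∈ T.image σ.symm, a j := by
        rw [Finset.prod_image (fun i _ j _ h => σ.symm.injective h)]
        exact Finset.prod_congr rfl fun j _ => haeig j
      rw [h1]
      exact prod_antitone_subset_le a ha ha0 _
        (by rw [Finset.card_image_of_injective _ σ.symm.injective, hT]) hm
    have hcb : ∀ T : Finset (Fin n), T.card = m → ∏ j ∈ T, hB.1.eigenvalues j ≤ cb := by
      intro T hT
      have h1 : ∏ j ∈ T, hB.1.eigenvalues j = ∏ j ∈ T.image τ.symm, b j := by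
        rw [Finset.prod_image (fun i _ j _ h => τ.symm.injective h)]
        exact Finset.prod_congr rfl fun j _ => hbeig j
      rw [h1]
      exact prod_antitone_subset_le b hb hb0 _
        (by rw [Finset.card_image_of_injective _ τ.symm.injective, hT]) hm
    have hW : (Q * V)ᴴ * B * (Q * V) = Vᴴ * C * V := by
      rw [conjTranspose_mul, hQH, hCdef]
      simp only [Matrix.mul_assoc]
    have hWW : (Q * V)ᴴ * (Q * V) = Vᴴ * A * V := by
      rw [conjTranspose_mul, hQH,
        show Vᴴ * Q * (Q * V) = Vᴴ * (Q * Q) * V by simp only [Matrix.mul_assoc], hQdef,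
        hA.sqrt_mul_self]
    have h1 := key_det_le hB cb hcb (Q * V)
    have h2 := key_det_le hA ca hca V
    rw [hW, hWW] at h1
    rw [hVV] at h2
    simp only [Matrix.det_one, Complex.one_re, mul_one] at h2
    have hcb0 : 0 ≤ cb := Finset.prod_nonneg fun i _ => hb0 _
    have hfinal : (Vᴴ * C * V).det.re = ∏ i : Fin m, μ (Fin.castLE hm i) := by
      rw [hVCV, det_diagonal, ← Complex.ofReal_prod]
      exact Complex.ofReal_re _
    calc ∏ i : Fin m, μ (Fin.castLE hm i) = (Vᴴ * C * V).det.re := hfinal.symm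
      _ ≤ cb * (Vᴴ * A * V).det.re := h1
      _ ≤ cb * ca := mul_le_mul_of_nonneg_left h2 hcb0
      _ = ca * cb := mul_comm _ _
  -- apply the scalar majorization lemma
  set x : ℕ → ℝ := fun i => if h : i < n then μ ⟨i, h⟩ else 0 with hxdef
  set y : ℕ → ℝ := fun i => if h : i < n then a ⟨i, h⟩ * b ⟨i, h⟩ else 0 with hydef
  have hxval : ∀ m (hm : m ≤ n) (i : Fin m), x i.1 = μ (Fin.castLE hm i) := by
    intro m hm i
    have hi : (i : ℕ) < n := lt_of_lt_of_le i.2 hm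
    simp only [hxdef, dif_pos hi]
    rfl
  have hyval : ∀ m (hm : m ≤ n) (i : Fin m),
      y i.1 = a (Fin.castLE hm i) * b (Fin.castLE hm i) := by
    intro m hm i
    have hi : (i : ℕ) < n := lt_of_lt_of_le i.2 hm
    simp only [hydef, dif_pos hi]
    rfl
  have hmain : ∏ i ∈ Finset.range n, (1 + x i) ≤ ∏ i ∈ Finset.range n, (1 + y i) := by
    apply prod_one_add_le_of_prefix_prod_le
    · intro i j hij hj
      simp only [hxdef, dif_pos hj, dif_pos (lt_of_le_of_lt hij hj)]
      exact hμanti (by exact_mod_cast hij)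
    · intro i hi; simp only [hxdef, dif_pos hi]; exact hμ0 _
    · intro i hi; simp only [hydef, dif_pos hi]
      exact mul_nonneg (ha0 _) (hb0 _)
    · intro m hm
      rw [← Fin.prod_univ_eq_prod_range (fun i => x i) m,
        ← Fin.prod_univ_eq_prod_range (fun i => y i) m]
      calc ∏ i : Fin m, x i.1 = ∏ i : Fin m, μ (Fin.castLE hm i) :=
            Finset.prod_congr rfl fun i _ => hxval m hm i
        _ ≤ (∏ i : Fin m, a (Fin.castLE hm i)) * ∏ i : Fin m, b (Fin.castLE hm i) := horn m hm
        _ = ∏ i : Fin m, a (Fin.castLE hm i) * b (Fin.castLE hm i) :=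
            (Finset.prod_mul_distrib).symm
        _ = ∏ i : Fin m, y i.1 := Finset.prod_congr rfl fun i _ => (hyval m hm i).symm
  refine ⟨him, ?_⟩
  rw [hre, hprodμ]
  calc ∏ i, (1 + μ i) = ∏ i ∈ Finset.range n, (1 + x i) := by
        rw [← Fin.prod_univ_eq_prod_range (fun i => 1 + x i) n]
        exact Finset.prod_congr rfl fun i _ => by
          rw [hxval n le_rfl i]
          congr 1
    _ ≤ ∏ i ∈ Finset.range n, (1 + y i) := hmain
    _ = ∏ i : Fin n, (1 + a i * b i) := by
        rw [← Fin.prod_univ_eq_prod_range (fun i => 1 + y i) n]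
        exact Finset.prod_congr rfl fun i _ => by
          rw [hyval n le_rfl i]
          congr 1
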